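/- Let T : A → ℝ be continuous and convex on an open subset A of a normed vector space. Then T is Gateaux differentiable at a ∈ A if and only if the subdifferential ∂T(a) is a singleton. -/

import Mathlib

open Filter Set

/-- Monotonicity of slopes of a convex function along a line through `a`. -/
private lemma slope_key {Y : Type*} [NormedAddCommGroup Y] [NormedSpace ℝ Y]
    {A : Set Y} {T : Y → ℝ} (hconv : ConvexOn ℝ A T) {a : Y} (ha : a ∈ A)
    (H : Y) {t t' : ℝ} (hmt : a + t • H ∈ A) (hmt' : a + t' • H ∈ A)
    (ht : t ≠ 0) (ht' : t' ≠ 0) (htt' : t ≤ t') :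
    (T (a + t • H) - T a) / t ≤ (T (a + t' • H) - T a) / t' := by
  have hφ := hconv.comp_affineMap (AffineMap.lineMap a (a + H) : ℝ →ᵃ[ℝ] Y)
  have hline : ∀ s : ℝ, (AffineMap.lineMap a (a + H) : ℝ →ᵃ[ℝ] Y) s = a + s • H := by
    intro s
    simp [AffineMap.lineMap_apply, add_sub_cancel_left, add_comm]
  have h0 : (0 : ℝ) ∈ (AffineMap.lineMap a (a + H) : ℝ →ᵃ[ℝ] Y) ⁻¹' A := by
    simp only [mem_preimage, hline, zero_smul, add_zero]; exact ha
  have h1 : t ∈ (AffineMap.lineMap a (a + H) : ℝ →ᵃ[ℝ] Y) ⁻¹' A := by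
    simp only [mem_preimage, hline]; exact hmt
  have h2 : t' ∈ (AffineMap.lineMap a (a + H) : ℝ →ᵃ[ℝ] Y) ⁻¹' A := by
    simp only [mem_preimage, hline]; exact hmt'
  have := hφ.secant_mono h0 h1 h2 ht ht' htt'
  simpa [Function.comp, hline, sub_zero] using this

theorem gateaux_iff_subdifferential_singleton
    {Y : Type*} [NormedAddCommGroup Y] [NormedSpace ℝ Y]
    (A : Set Y) (hA : IsOpen A)
    (T : Y → ℝ) (hconv : ConvexOn ℝ A T) (hcont : ContinuousOn T A)
    (a : Y) (ha : a ∈ A) :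
    (∃ D : Y →L[ℝ] ℝ, ∀ H : Y,
        Tendsto (fun t : ℝ => (T (a + t • H) - T a) / t) (nhdsWithin 0 {0}ᶜ) (nhds (D H)))
      ↔
    (∃ D : Y →L[ℝ] ℝ, {D' : Y →L[ℝ] ℝ | ∀ b ∈ A, T a + D' (b - a) ≤ T b} = {D}) := by
  have hconvA : Convex ℝ A := hconv.1
  obtain ⟨δ, hδpos, hball⟩ := Metric.isOpen_iff.1 hA a ha
  set q : Y → ℝ → ℝ := fun H t => (T (a + t • H) - T a) / t with hqdef
  have hmem : ∀ (H : Y) (t : ℝ), |t| * ‖H‖ < δ → a + t • H ∈ A := by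
    intro H t h
    apply hball
    rwa [Metric.mem_ball, dist_eq_norm, add_sub_cancel_left, norm_smul, Real.norm_eq_abs]
  set ε : Y → ℝ := fun H => δ / (‖H‖ + 1) with hεdef
  have hεpos : ∀ H, 0 < ε H := fun H => div_pos hδpos (by positivity)
  have hmemε : ∀ (H : Y) (t : ℝ), |t| < ε H → a + t • H ∈ A := by
    intro H t h
    apply hmem
    have h1 : (0:ℝ) < ‖H‖ + 1 := by positivity
    calc |t| * ‖H‖ ≤ |t| * (‖H‖ + 1) := by nlinarith [abs_nonneg t]
      _ < ε H * (‖H‖ + 1) := by exact mul_lt_mul_of_pos_right h h1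
      _ = δ := div_mul_cancel₀ _ (ne_of_gt h1)
  constructor
  · rintro ⟨D, hD⟩
    have hDsub : ∀ b ∈ A, T a + D (b - a) ≤ T b := by
      intro b hb
      have hten : Tendsto (q (b - a)) (nhdsWithin (0:ℝ) (Ioi 0)) (nhds (D (b - a))) :=
        (hD (b - a)).mono_left (nhdsWithin_mono _ fun t ht => ne_of_gt ht)
      have hle : D (b - a) ≤ T b - T a := by
        refine le_of_tendsto hten ?_
        filter_upwards [Ioo_mem_nhdsGT one_pos] with t ht
        have hseg : a + t • (b - a) ∈ A :=
          hconvA.add_smul_sub_mem ha hb ⟨ht.1.le, ht.2.le⟩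
        have h1 : a + (1:ℝ) • (b - a) ∈ A := by simpa using hb
        have := slope_key hconv ha (b - a) hseg h1 (ne_of_gt ht.1) one_ne_zero ht.2.le
        simpa [hqdef] using this
      linarith
    refine ⟨D, Subset.antisymm ?_ (singleton_subset_iff.mpr hDsub)⟩
    intro D' hD'
    simp only [mem_setOf_eq] at hD'
    have key : ∀ H, D' H = D H := by
      intro H
      have htenR : Tendsto (q H) (nhdsWithin (0:ℝ) (Ioi 0)) (nhds (D H)) :=
        (hD H).mono_left (nhdsWithin_mono _ fun t ht => ne_of_gt ht)
      have htenL : Tendsto (q H) (nhdsWithin (0:ℝ) (Iio 0)) (nhds (D H)) :=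
        (hD H).mono_left (nhdsWithin_mono _ fun t ht => ne_of_lt ht)
      have h1 : D' H ≤ D H := by
        refine ge_of_tendsto htenR ?_
        filter_upwards [Ioo_mem_nhdsGT (hεpos H)] with t ht
        have hmt := hmemε H t (by rw [abs_of_pos ht.1]; exact ht.2)
        have hb := hD' _ hmt
        rw [add_sub_cancel_left, map_smul, smul_eq_mul] at hb
        show D' H ≤ (T (a + t • H) - T a) / t
        rw [le_div_iff₀ ht.1]
        linarith
      have h2 : D H ≤ D' H := by
        refine le_of_tendsto htenL ?_
        filter_upwards [Ioo_mem_nhdsLT (neg_lt_zero.2 (hεpos H))] with t ht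
        have hmt := hmemε H t (by rw [abs_of_neg ht.2]; linarith [ht.1])
        have hb := hD' _ hmt
        rw [add_sub_cancel_left, map_smul, smul_eq_mul] at hb
        show (T (a + t • H) - T a) / t ≤ D' H
        rw [div_le_iff_of_neg ht.2]
        linarith
      linarith
    simp only [mem_singleton_iff]
    exact ContinuousLinearMap.ext key
  · rintro ⟨D, hset⟩
    have hDsub : ∀ b ∈ A, T a + D (b - a) ≤ T b := by
      have : D ∈ ({D} : Set (Y →L[ℝ] ℝ)) := rfl
      rw [← hset] at this
      exact this
    have hmono : ∀ H, MonotoneOn (q H) (Ioo 0 (ε H)) := by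
      intro H t ht t' ht' h
      exact slope_key hconv ha H (hmemε H t (by rw [abs_of_pos ht.1]; exact ht.2))
        (hmemε H t' (by rw [abs_of_pos ht'.1]; exact ht'.2))
        (ne_of_gt ht.1) (ne_of_gt ht'.1) h
    have hbdd : ∀ H, BddBelow (q H '' Ioo 0 (ε H)) := by
      intro H
      refine ⟨q H (-(ε H) / 2), ?_⟩
      rintro x ⟨t, ht, rfl⟩
      refine slope_key hconv ha H (hmemε H _ ?_) (hmemε H t (by rw [abs_of_pos ht.1]; exact ht.2))
        (ne_of_lt (by linarith [hεpos H]))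
        (ne_of_gt ht.1) (by linarith [ht.1, hεpos H])
      rw [abs_of_neg (by linarith [hεpos H])]
      linarith [hεpos H]
    set p : Y → ℝ := fun H => sInf (q H '' Ioo 0 (ε H)) with hpdef
    have hlim : ∀ H, Tendsto (q H) (nhdsWithin (0:ℝ) (Ioi 0)) (nhds (p H)) := fun H =>
      MonotoneOn.tendsto_nhdsWithin_Ioo_right
        ⟨ε H / 2, by constructor <;> [linarith [hεpos H]; linarith [hεpos H]]⟩
        (hmono H) (hbdd H)
    have hp_le : ∀ (H : Y) (t : ℝ), 0 < t → a + t • H ∈ A → p H ≤ q H t := by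
      intro H t ht hmt
      refine le_of_tendsto (hlim H) ?_
      filter_upwards [Ioo_mem_nhdsGT (lt_min (hεpos H) ht)] with s hs
      exact slope_key hconv ha H
        (hmemε H s (by rw [abs_of_pos hs.1]; exact hs.2.trans_le (min_le_left _ _))) hmt
        (ne_of_gt hs.1) (ne_of_gt ht) (hs.2.le.trans (min_le_right _ _))
    have hD_le_p : ∀ H, D H ≤ p H := by
      intro H
      refine ge_of_tendsto (hlim H) ?_
      filter_upwards [Ioo_mem_nhdsGT (hεpos H)] with t ht
      have hb := hDsub _ (hmemε H t (by rw [abs_of_pos ht.1]; exact ht.2))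
      rw [add_sub_cancel_left, map_smul, smul_eq_mul] at hb
      rw [hqdef, le_div_iff₀ ht.1]
      linarith
    have hp0 : p 0 = 0 := by
      refine tendsto_nhds_unique (hlim 0) ?_
      have hq0 : q (0:Y) = fun _ : ℝ => (0:ℝ) := by
        funext t; simp [hqdef]
      rw [hq0]
      exact tendsto_const_nhds
    have hmulpos : ∀ c : ℝ, 0 < c →
        Tendsto (fun t : ℝ => c * t) (nhdsWithin 0 (Ioi 0)) (nhdsWithin 0 (Ioi 0)) := by
      intro c hc
      apply tendsto_nhdsWithin_of_tendsto_nhds_of_eventually_within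
      · have h0 : Tendsto (fun t : ℝ => c * t) (nhds 0) (nhds (c * 0)) :=
          (continuous_const.mul continuous_id).tendsto 0
        simpa using h0.mono_left nhdsWithin_le_nhds
      · filter_upwards [self_mem_nhdsWithin] with t (ht : t ∈ Ioi (0:ℝ))
        exact mul_pos hc ht
    have hsmul : ∀ c : ℝ, 0 < c → ∀ H, p (c • H) = c * p H := by
      intro c hc H
      have h1 : Tendsto (fun t : ℝ => q H (c * t)) (nhdsWithin (0:ℝ) (Ioi 0)) (nhds (p H)) :=
        (hlim H).comp (hmulpos c hc)
      have heq : q (c • H) = fun t : ℝ => c * q H (c * t) := by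
        funext t
        rcases eq_or_ne t 0 with rfl | ht
        · simp [hqdef]
        · have hs : t • (c • H) = (c * t) • H := by rw [smul_smul, mul_comm]
          show (T (a + t • (c • H)) - T a) / t = c * ((T (a + (c * t) • H) - T a) / (c * t))
          rw [hs]
          have hc' : c ≠ 0 := ne_of_gt hc
          field_simp
      have h2 : Tendsto (q (c • H)) (nhdsWithin (0:ℝ) (Ioi 0)) (nhds (c * p H)) := by
        rw [heq]; exact h1.const_mul c
      exact tendsto_nhds_unique (hlim (c • H)) h2
    have hadd : ∀ H₁ H₂, p (H₁ + H₂) ≤ p H₁ + p H₂ := by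
      intro H₁ H₂
      have h2 : Tendsto (fun t : ℝ => q H₁ (2 * t) + q H₂ (2 * t))
          (nhdsWithin (0:ℝ) (Ioi 0)) (nhds (p H₁ + p H₂)) :=
        (((hlim H₁).comp (hmulpos 2 two_pos)).add ((hlim H₂).comp (hmulpos 2 two_pos)))
      refine le_of_tendsto_of_tendsto (hlim (H₁ + H₂)) h2 ?_
      filter_upwards [Ioo_mem_nhdsGT
        (by positivity : (0:ℝ) < min (ε (H₁ + H₂)) (min (ε H₁ / 2) (ε H₂ / 2)))] with t ht
      obtain ⟨ht0, htlt⟩ := ht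
      have h2t1 : a + (2 * t) • H₁ ∈ A := by
        apply hmemε
        rw [abs_of_pos (by linarith)]
        have := htlt.trans_le (le_trans (min_le_right _ _) (min_le_left _ _))
        linarith
      have h2t2 : a + (2 * t) • H₂ ∈ A := by
        apply hmemε
        rw [abs_of_pos (by linarith)]
        have := htlt.trans_le (le_trans (min_le_right _ _) (min_le_right _ _))
        linarith
      have hmid : a + t • (H₁ + H₂) =
          (1/2 : ℝ) • (a + (2 * t) • H₁) + (1/2 : ℝ) • (a + (2 * t) • H₂) := by
        module
      have hcvx := hconv.2 h2t1 h2t2 (by norm_num : (0:ℝ) ≤ 1/2) (by norm_num : (0:ℝ) ≤ 1/2)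
        (by norm_num)
      rw [← hmid] at hcvx
      rw [hqdef]
      simp only [smul_eq_mul] at hcvx
      rw [← add_div, div_le_div_iff₀ ht0 (by linarith : (0:ℝ) < 2 * t)]
      nlinarith [hcvx]
    have hpD : ∀ H, p H = D H := by
      by_contra hcon
      push_neg at hcon
      obtain ⟨H₀, hne⟩ := hcon
      have hlt : D H₀ < p H₀ := (hD_le_p H₀).lt_of_ne (Ne.symm hne)
      have hH₀ : H₀ ≠ 0 := by
        rintro rfl
        rw [hp0] at hlt
        simp at hlt
      have hfle : ∀ x : (LinearPMap.mkSpanSingleton (K := ℝ) (L := ℝ) (σ := RingHom.id ℝ) H₀ (p H₀) hH₀).domain,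
          (LinearPMap.mkSpanSingleton (K := ℝ) (L := ℝ) (σ := RingHom.id ℝ) H₀ (p H₀) hH₀) x ≤ p x := by
        rintro ⟨x, hx⟩
        obtain ⟨c, rfl⟩ := Submodule.mem_span_singleton.1 hx
        rw [LinearPMap.mkSpanSingleton'_apply]
        rw [smul_eq_mul]
        show c * p H₀ ≤ p (c • H₀)
        rcases lt_trichotomy c 0 with hc | rfl | hc
        · have hre : c • H₀ = (-c) • (-H₀) := by module
          rw [hre, hsmul (-c) (by linarith) (-H₀)]
          have hsum : 0 ≤ p H₀ + p (-H₀) := by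
            have := hadd H₀ (-H₀)
            rw [add_neg_cancel, hp0] at this
            linarith
          nlinarith
        · simp [hp0]
        · rw [hsmul c hc H₀]
      obtain ⟨g, hg1, hg2⟩ := exists_extension_of_le_sublinear
        (LinearPMap.mkSpanSingleton H₀ (p H₀) hH₀) p
        (fun c hc x => hsmul c hc x) hadd hfle
      have hgH₀ : g H₀ = p H₀ := by
        have := hg1 ⟨H₀, Submodule.mem_span_singleton_self H₀⟩
        rwa [LinearPMap.mkSpanSingleton_apply] at this
      -- continuity of g
      have hCa : ContinuousAt T a := hcont.continuousAt (hA.mem_nhds ha)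
      obtain ⟨δ', hδ'pos, hδ'⟩ := Metric.continuousAt_iff.1 hCa 1 one_pos
      set r : ℝ := min δ' δ with hrdef
      have hrpos : 0 < r := lt_min hδ'pos hδpos
      have hboundp : ∀ x : Y, ‖x‖ < r → p x ≤ 1 := by
        intro x hx
        have hmem1 : a + (1:ℝ) • x ∈ A := by
          rw [one_smul]
          apply hball
          rw [Metric.mem_ball, dist_eq_norm, add_sub_cancel_left]
          exact hx.trans_le (min_le_right _ _)
        have hple := hp_le x 1 one_pos hmem1
        have hdist : dist (a + x) a < δ' := by
          rw [dist_eq_norm, add_sub_cancel_left]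
          exact hx.trans_le (min_le_left _ _)
        have := hδ' hdist
        rw [Real.dist_eq] at this
        have habs := abs_lt.1 this
        rw [hqdef] at hple
        simp only [one_smul, div_one] at hple
        linarith [habs.2]
      have gbound : ∀ x : Y, ‖g x‖ ≤ (2 / r) * ‖x‖ := by
        intro x
        rcases eq_or_ne x 0 with rfl | hx
        · simp
        · have hnx : 0 < ‖x‖ := norm_pos_iff.2 hx
          set c : ℝ := r / (2 * ‖x‖) with hcdef
          have hc : 0 < c := by positivity
          have hnorm : ‖c • x‖ < r := by
            rw [norm_smul, Real.norm_eq_abs, abs_of_pos hc, hcdef]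
            rw [div_mul_eq_mul_div, mul_comm 2 ‖x‖, ← div_div]
            rw [mul_div_assoc, div_self (ne_of_gt hnx)]
            linarith [hrpos]
          have h2 : g (c • x) ≤ 1 := le_trans (hg2 _) (hboundp _ hnorm)
          have h3 : g (-(c • x)) ≤ 1 := by
            refine le_trans (hg2 _) (hboundp _ ?_)
            rwa [norm_neg]
          rw [map_neg] at h3
          have habs : |g (c • x)| ≤ 1 := abs_le.2 ⟨by linarith, h2⟩
          rw [map_smul, smul_eq_mul, abs_mul, abs_of_pos hc] at habs
          rw [Real.norm_eq_abs]
          rw [hcdef] at habs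
          rw [div_mul_eq_mul_div, div_le_iff₀ (by positivity : (0:ℝ) < 2 * ‖x‖)] at habs
          rw [div_mul_eq_mul_div, le_div_iff₀ hrpos]
          nlinarith
      set G : Y →L[ℝ] ℝ := LinearMap.mkContinuous g (2 / r) gbound with hGdef
      have hGsub : G ∈ {D' : Y →L[ℝ] ℝ | ∀ b ∈ A, T a + D' (b - a) ≤ T b} := by
        intro b hb
        have h1 : g (b - a) ≤ p (b - a) := hg2 _
        have h2 : p (b - a) ≤ q (b - a) 1 := by
          refine hp_le _ 1 one_pos ?_
          simpa using hb
        rw [hqdef] at h2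
        simp only [one_smul, div_one, add_sub_cancel] at h2
        have hGb : G (b - a) = g (b - a) := rfl
        rw [hGb]
        linarith
      rw [hset, mem_singleton_iff] at hGsub
      have hgD : g H₀ = D H₀ := by
        rw [← hGsub]; rfl
      rw [hgH₀] at hgD
      linarith
    refine ⟨D, fun H => ?_⟩
    have hmain : Tendsto (q H) (nhdsWithin (0:ℝ) {0}ᶜ) (nhds (D H)) := by
      rw [show (nhdsWithin (0:ℝ) {0}ᶜ) = nhdsWithin 0 (Iio 0) ⊔ nhdsWithin 0 (Ioi 0) from
        (nhdsLT_sup_nhdsGT 0).symm, tendsto_sup]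
      constructor
      · have hR : Tendsto (q (-H)) (nhdsWithin (0:ℝ) (Ioi 0)) (nhds (D (-H))) := by
          rw [← hpD]; exact hlim (-H)
        have hneg : Tendsto (fun t : ℝ => -t) (nhdsWithin (0:ℝ) (Iio 0))
            (nhdsWithin (0:ℝ) (Ioi 0)) := by
          apply tendsto_nhdsWithin_of_tendsto_nhds_of_eventually_within
          · have h0 : Tendsto (fun t : ℝ => -t) (nhds (0:ℝ)) (nhds (-0)) :=
              continuous_neg.tendsto 0
            simpa using h0.mono_left nhdsWithin_le_nhds
          · filter_upwards [self_mem_nhdsWithin] with t (ht : t ∈ Iio (0:ℝ))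
            exact neg_pos.2 (mem_Iio.1 ht)
        have hcomp : Tendsto (fun t : ℝ => -(q (-H) (-t))) (nhdsWithin (0:ℝ) (Iio 0))
            (nhds (-(D (-H)))) := (hR.comp hneg).neg
        have heq : q H = fun t : ℝ => -(q (-H) (-t)) := by
          funext t
          show (T (a + t • H) - T a) / t = -((T (a + (-t) • -H) - T a) / (-t))
          rw [neg_smul, smul_neg, neg_neg, div_neg, neg_neg]
        rw [heq]
        simpa using hcomp
      · rw [← hpD]; exact hlim H
    exact hmain
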